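/- Under the projector hypotheses, the 4-tensor T = ρ[((n−2)(n−3)/2)(g⊙g) + (P⊙P) − (n−3)(g⊙P)] satisfies the full-trace identity (T·T·T)_{μν}{}^{μν} = 8(n−1)(n−2)(n−3)[(n−2)(n−3)(n−4)+2]·ρ³. -/
import Mathlib


open Finset

variable {ι : Type*} [Fintype ι] [DecidableEq ι]

/-- Kulkarni–Nomizu product of two 2-tensors:
`(A⊙B)_{μνλκ} = A_{μλ}B_{νκ} − A_{νλ}B_{μκ} − A_{μκ}B_{νλ} + A_{νκ}B_{μλ}`. -/
def KN (A B : ι → ι → ℝ) : ι → ι → ι → ι → ℝ :=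
  fun μ ν l κ => A μ l * B ν κ - A ν l * B μ κ - A μ κ * B ν l + A ν κ * B μ l

/-- Contraction of two 2-tensors via the inverse metric:
`(A·B)_{μκ} = Σ_{ν,λ} A_{μν}(Ḡ⁻¹)_{νλ}B_{λκ}`. -/
def dot2 (Ginv : ι → ι → ℝ) (A B : ι → ι → ℝ) : ι → ι → ℝ :=
  fun μ κ => ∑ ν, ∑ l, A μ ν * Ginv ν l * B l κ

/-- Contraction of two 4-tensors via the inverse metric:
`(R·S)_{μνλκ} = Σ R_{μνστ}(Ḡ⁻¹)_{σσ'}(Ḡ⁻¹)_{ττ'}S_{σ'τ'λκ}`. -/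
def dot4 (Ginv : ι → ι → ℝ) (R S : ι → ι → ι → ι → ℝ) : ι → ι → ι → ι → ℝ :=
  fun μ ν l κ => ∑ σ, ∑ τ, ∑ σ', ∑ τ', R μ ν σ τ * Ginv σ σ' * Ginv τ τ' * S σ' τ' l κ

/-- Trace of a 2-tensor: `tr A = Σ_{μ,ν} (Ḡ⁻¹)_{μν}A_{νμ}`. -/
def tr2 (Ginv : ι → ι → ℝ) (A : ι → ι → ℝ) : ℝ :=
  ∑ μ, ∑ ν, Ginv μ ν * A ν μ

/-- Partial trace of a 4-tensor: `R_{μν}{}^ν{}_κ = Σ_{ν,ν'} (Ḡ⁻¹)_{νν'} R_{μνν'κ}`. -/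
def ptr4 (Ginv : ι → ι → ℝ) (R : ι → ι → ι → ι → ℝ) : ι → ι → ℝ :=
  fun μ κ => ∑ ν, ∑ ν', Ginv ν ν' * R μ ν ν' κ

/-- Full trace of a 4-tensor: `R_{μν}{}^{μν} = Σ (Ḡ⁻¹)_{μμ'}(Ḡ⁻¹)_{νν'} R_{μνμ'ν'}`. -/
def ftr4 (Ginv : ι → ι → ℝ) (R : ι → ι → ι → ι → ℝ) : ℝ :=
  ∑ μ, ∑ μ', ∑ ν, ∑ ν', Ginv μ μ' * Ginv ν ν' * R μ ν μ' ν'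

/-- The curvature 4-tensor of a generalized Schwarzschild–Tangherlini geometry,
`T = ρ[((n−2)(n−3)/2)(g⊙g) + (P⊙P) − (n−3)(g⊙P)]`. -/
noncomputable def Tgst (n : ℕ) (ρ : ℝ) (g P : ι → ι → ℝ) : ι → ι → ι → ι → ℝ :=
  fun μ ν l κ => ρ * (((n : ℝ) - 2) * ((n : ℝ) - 3) / 2 * KN g g μ ν l κ
    + KN P P μ ν l κ - ((n : ℝ) - 3) * KN g P μ ν l κ)

set_option linter.unusedSectionVars false

section AuxTgst

variable (Ginv : ι → ι → ℝ)

private lemma key_aux (f h : ι → ι → ℝ) :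
    (∑ a, ∑ b, f a b) * (∑ c, ∑ d, h c d) = ∑ a, ∑ c, ∑ b, ∑ d, f a b * h c d := by
  rw [Finset.sum_mul]
  refine Finset.sum_congr rfl fun a _ => ?_
  rw [Finset.mul_sum]
  refine Finset.sum_congr rfl fun c _ => ?_
  exact Finset.sum_mul_sum _ _ _ _

private lemma key_aux' (f h : ι → ι → ℝ) :
    (∑ a, ∑ b, f a b) * (∑ c, ∑ d, h c d) = ∑ a, ∑ c, ∑ b, ∑ d, f c d * h a b := by
  rw [mul_comm, key_aux]
  exact Finset.sum_congr rfl fun _ _ => Finset.sum_congr rfl fun _ _ =>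
    Finset.sum_congr rfl fun _ _ => Finset.sum_congr rfl fun _ _ => mul_comm _ _

private lemma key_aux2 (f h : ι → ι → ℝ) :
    (∑ a, ∑ b, f a b) * (∑ c, ∑ d, h c d) = ∑ a, ∑ b, ∑ c, ∑ d, f a b * h c d := by
  rw [Finset.sum_mul]
  refine Finset.sum_congr rfl fun a _ => ?_
  rw [Finset.sum_mul]
  refine Finset.sum_congr rfl fun b _ => ?_
  rw [Finset.mul_sum]
  refine Finset.sum_congr rfl fun c _ => ?_
  rw [Finset.mul_sum]

private lemma pairU (A C B D : ι → ι → ℝ) (μ l ν κ : ι) :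
    (∑ σ, ∑ τ, ∑ σ', ∑ τ', (A μ σ * Ginv σ σ' * C σ' l) * (B ν τ * Ginv τ τ' * D τ' κ))
      = dot2 Ginv A C μ l * dot2 Ginv B D ν κ := by
  simp only [dot2]
  exact (key_aux (fun a b => A μ a * Ginv a b * C b l)
    (fun c d => B ν c * Ginv c d * D d κ)).symm

private lemma pairC (A C B D : ι → ι → ℝ) (μ l ν κ : ι) :
    (∑ σ, ∑ τ, ∑ σ', ∑ τ', (A μ τ * Ginv τ τ' * C τ' l) * (B ν σ * Ginv σ σ' * D σ' κ))
      = dot2 Ginv A C μ l * dot2 Ginv B D ν κ := by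
  simp only [dot2]
  exact (key_aux' (fun a b => A μ a * Ginv a b * C b l)
    (fun c d => B ν c * Ginv c d * D d κ)).symm

private lemma dot4_KN (A B C D : ι → ι → ℝ) (μ ν l κ : ι) :
    dot4 Ginv (KN A B) (KN C D) μ ν l κ =
      2 * KN (dot2 Ginv A C) (dot2 Ginv B D) μ ν l κ
        + 2 * KN (dot2 Ginv A D) (dot2 Ginv B C) μ ν l κ := by
  have step : dot4 Ginv (KN A B) (KN C D) μ ν l κ =
      (∑ σ, ∑ τ, ∑ σ', ∑ τ', (A μ σ * Ginv σ σ' * C σ' l) * (B ν τ * Ginv τ τ' * D τ' κ))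
      - (∑ σ, ∑ τ, ∑ σ', ∑ τ', (A μ σ * Ginv σ σ' * D σ' κ) * (B ν τ * Ginv τ τ' * C τ' l))
      - (∑ σ, ∑ τ, ∑ σ', ∑ τ', (A μ σ * Ginv σ σ' * C σ' κ) * (B ν τ * Ginv τ τ' * D τ' l))
      + (∑ σ, ∑ τ, ∑ σ', ∑ τ', (A μ σ * Ginv σ σ' * D σ' l) * (B ν τ * Ginv τ τ' * C τ' κ))
      - (∑ σ, ∑ τ, ∑ σ', ∑ τ', (A ν σ * Ginv σ σ' * C σ' l) * (B μ τ * Ginv τ τ' * D τ' κ))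
      + (∑ σ, ∑ τ, ∑ σ', ∑ τ', (A ν σ * Ginv σ σ' * D σ' κ) * (B μ τ * Ginv τ τ' * C τ' l))
      + (∑ σ, ∑ τ, ∑ σ', ∑ τ', (A ν σ * Ginv σ σ' * C σ' κ) * (B μ τ * Ginv τ τ' * D τ' l))
      - (∑ σ, ∑ τ, ∑ σ', ∑ τ', (A ν σ * Ginv σ σ' * D σ' l) * (B μ τ * Ginv τ τ' * C τ' κ))
      - (∑ σ, ∑ τ, ∑ σ', ∑ τ', (A μ τ * Ginv τ τ' * D τ' κ) * (B ν σ * Ginv σ σ' * C σ' l))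
      + (∑ σ, ∑ τ, ∑ σ', ∑ τ', (A μ τ * Ginv τ τ' * C τ' l) * (B ν σ * Ginv σ σ' * D σ' κ))
      + (∑ σ, ∑ τ, ∑ σ', ∑ τ', (A μ τ * Ginv τ τ' * D τ' l) * (B ν σ * Ginv σ σ' * C σ' κ))
      - (∑ σ, ∑ τ, ∑ σ', ∑ τ', (A μ τ * Ginv τ τ' * C τ' κ) * (B ν σ * Ginv σ σ' * D σ' l))
      + (∑ σ, ∑ τ, ∑ σ', ∑ τ', (A ν τ * Ginv τ τ' * D τ' κ) * (B μ σ * Ginv σ σ' * C σ' l))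
      - (∑ σ, ∑ τ, ∑ σ', ∑ τ', (A ν τ * Ginv τ τ' * C τ' l) * (B μ σ * Ginv σ σ' * D σ' κ))
      - (∑ σ, ∑ τ, ∑ σ', ∑ τ', (A ν τ * Ginv τ τ' * D τ' l) * (B μ σ * Ginv σ σ' * C σ' κ))
      + (∑ σ, ∑ τ, ∑ σ', ∑ τ', (A ν τ * Ginv τ τ' * C τ' κ) * (B μ σ * Ginv σ σ' * D σ' l)) := by
    simp only [dot4, KN, ← Finset.sum_add_distrib, ← Finset.sum_sub_distrib]
    refine Finset.sum_congr rfl fun σ _ => Finset.sum_congr rfl fun τ _ =>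
      Finset.sum_congr rfl fun σ' _ => Finset.sum_congr rfl fun τ' _ => ?_
    ring
  rw [step]
  simp only [pairU, pairC]
  simp only [KN]
  ring

private lemma dot4_lin (R1 R2 R3 S1 S2 S3 : ι → ι → ι → ι → ℝ)
    (a b c a' b' c' : ℝ) (μ ν l κ : ι) :
    dot4 Ginv (fun p q r s => a * R1 p q r s + b * R2 p q r s + c * R3 p q r s)
      (fun p q r s => a' * S1 p q r s + b' * S2 p q r s + c' * S3 p q r s) μ ν l κ =
    a * a' * dot4 Ginv R1 S1 μ ν l κ + a * b' * dot4 Ginv R1 S2 μ ν l κ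
      + a * c' * dot4 Ginv R1 S3 μ ν l κ
      + b * a' * dot4 Ginv R2 S1 μ ν l κ + b * b' * dot4 Ginv R2 S2 μ ν l κ
      + b * c' * dot4 Ginv R2 S3 μ ν l κ
      + c * a' * dot4 Ginv R3 S1 μ ν l κ + c * b' * dot4 Ginv R3 S2 μ ν l κ
      + c * c' * dot4 Ginv R3 S3 μ ν l κ := by
  simp only [dot4, Finset.mul_sum, ← Finset.sum_add_distrib]
  refine Finset.sum_congr rfl fun _ _ => Finset.sum_congr rfl fun _ _ =>
    Finset.sum_congr rfl fun _ _ => Finset.sum_congr rfl fun _ _ => ?_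
  ring

private lemma ftr4_lin (R1 R2 R3 : ι → ι → ι → ι → ℝ) (a b c : ℝ) :
    ftr4 Ginv (fun p q r s => a * R1 p q r s + b * R2 p q r s + c * R3 p q r s)
      = a * ftr4 Ginv R1 + b * ftr4 Ginv R2 + c * ftr4 Ginv R3 := by
  simp only [ftr4, Finset.mul_sum, ← Finset.sum_add_distrib]
  refine Finset.sum_congr rfl fun _ _ => Finset.sum_congr rfl fun _ _ =>
    Finset.sum_congr rfl fun _ _ => Finset.sum_congr rfl fun _ _ => ?_
  ring

private lemma ftr4_KN (A B : ι → ι → ℝ)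
    (hA : ∀ μ ν, A μ ν = A ν μ) (hB : ∀ μ ν, B μ ν = B ν μ) :
    ftr4 Ginv (KN A B) = tr2 Ginv A * tr2 Ginv B + tr2 Ginv B * tr2 Ginv A
      - tr2 Ginv (dot2 Ginv A B) - tr2 Ginv (dot2 Ginv B A) := by
  have e1 : tr2 Ginv A * tr2 Ginv B
      = ∑ μ, ∑ μ', ∑ ν, ∑ ν', (Ginv μ μ' * A μ' μ) * (Ginv ν ν' * B ν' ν) := by
    simp only [tr2]; exact key_aux2 _ _
  have e2 : tr2 Ginv B * tr2 Ginv A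
      = ∑ μ, ∑ μ', ∑ ν, ∑ ν', (Ginv μ μ' * B μ' μ) * (Ginv ν ν' * A ν' ν) := by
    simp only [tr2]; exact key_aux2 _ _
  have e3 : tr2 Ginv (dot2 Ginv A B)
      = ∑ μ, ∑ μ', ∑ ν, ∑ ν', Ginv μ μ' * (A μ' ν * Ginv ν ν' * B ν' μ) := by
    simp only [tr2, dot2, Finset.mul_sum]
  have e4 : tr2 Ginv (dot2 Ginv B A)
      = ∑ μ, ∑ μ', ∑ ν, ∑ ν', Ginv μ μ' * (B μ' ν * Ginv ν ν' * A ν' μ) := by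
    simp only [tr2, dot2, Finset.mul_sum]
  rw [e1, e2, e3, e4]
  simp only [ftr4, KN, ← Finset.sum_add_distrib, ← Finset.sum_sub_distrib]
  refine Finset.sum_congr rfl fun μ _ => Finset.sum_congr rfl fun μ' _ =>
    Finset.sum_congr rfl fun ν _ => Finset.sum_congr rfl fun ν' _ => ?_
  rw [hA μ μ', hB ν ν', hA ν μ', hB μ ν', hA μ ν', hB ν μ', hA ν ν', hB μ μ']
  ring

end AuxTgst

/-- Under the projector hypotheses,
`(T·T·T)_{μν}{}^{μν} = 8(n−1)(n−2)(n−3)[(n−2)(n−3)(n−4)+2]·ρ³`. -/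
theorem Tgst_cube_full_trace {n : ℕ} (hn : 4 ≤ n) (hcard : Fintype.card ι = n)
    (Gbar Ginv g P : ι → ι → ℝ) (ρ : ℝ)
    (hGsymm : ∀ μ ν, Gbar μ ν = Gbar ν μ)
    (hGinv : ∀ μ l, ∑ ν, Gbar μ ν * Ginv ν l = if μ = l then (1 : ℝ) else 0)
    (hsplit : ∀ μ ν, Gbar μ ν = g μ ν + P μ ν)
    (hgsymm : ∀ μ ν, g μ ν = g ν μ) (hPsymm : ∀ μ ν, P μ ν = P ν μ)
    (hgg : ∀ μ ν, dot2 Ginv g g μ ν = g μ ν)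
    (hPP : ∀ μ ν, dot2 Ginv P P μ ν = P μ ν)
    (hgP : ∀ μ ν, dot2 Ginv g P μ ν = 0)
    (htrg : tr2 Ginv g = 2)
    (htrP : tr2 Ginv P = (n : ℝ) - 2)
    :
    ftr4 Ginv (dot4 Ginv (dot4 Ginv (Tgst n ρ g P) (Tgst n ρ g P)) (Tgst n ρ g P)) =
      8 * ((n : ℝ) - 1) * ((n : ℝ) - 2) * ((n : ℝ) - 3)
        * (((n : ℝ) - 2) * ((n : ℝ) - 3) * ((n : ℝ) - 4) + 2) * ρ ^ 3 := by
  -- Ginv is symmetric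
  have hGis : ∀ μ ν, Ginv μ ν = Ginv ν μ := by
    have hMN : (Matrix.of Gbar) * (Matrix.of Ginv) = 1 := by
      ext i j
      simpa [Matrix.mul_apply, Matrix.one_apply] using hGinv i j
    have hMT : Matrix.transpose (Matrix.of Gbar) = Matrix.of Gbar := by
      ext i j; exact hGsymm j i
    have hNT : Matrix.transpose (Matrix.of Ginv) = Matrix.of Ginv := by
      calc Matrix.transpose (Matrix.of Ginv)
          = Matrix.transpose (Matrix.of Ginv) * ((Matrix.of Gbar) * (Matrix.of Ginv)) := by
            rw [hMN, mul_one]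
        _ = Matrix.transpose ((Matrix.of Gbar) * (Matrix.of Ginv)) * (Matrix.of Ginv) := by
            rw [Matrix.transpose_mul, hMT, mul_assoc]
        _ = Matrix.of Ginv := by rw [hMN, Matrix.transpose_one, one_mul]
    intro μ ν
    have := congrFun (congrFun hNT ν) μ
    simpa [Matrix.transpose_apply] using this
  -- the transposed projector relation
  have hPg : ∀ μ ν, dot2 Ginv P g μ ν = 0 := by
    intro μ ν
    have h : dot2 Ginv P g μ ν = dot2 Ginv g P ν μ := by
      simp only [dot2]
      rw [Finset.sum_comm]
      refine Finset.sum_congr rfl fun a _ => Finset.sum_congr rfl fun b _ => ?_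
      rw [hPsymm μ b, hgsymm a ν, hGis b a]
      ring
    rw [h, hgP]
  -- T as a linear combination of KN products
  have hT : Tgst n ρ g P = fun p q r s =>
      (ρ * (((n : ℝ) - 2) * ((n : ℝ) - 3) / 2)) * KN g g p q r s
        + ρ * KN P P p q r s
        + (-(ρ * ((n : ℝ) - 3))) * KN g P p q r s := by
    funext p q r s
    simp only [Tgst]
    ring
  -- T·T
  have hTT : dot4 Ginv (Tgst n ρ g P) (Tgst n ρ g P) = fun p q r s =>
      (ρ ^ 2 * ((n : ℝ) - 2) ^ 2 * ((n : ℝ) - 3) ^ 2) * KN g g p q r s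
        + (4 * ρ ^ 2) * KN P P p q r s
        + (2 * ρ ^ 2 * ((n : ℝ) - 3) ^ 2) * KN g P p q r s := by
    rw [hT]
    funext p q r s
    rw [dot4_lin Ginv (KN g g) (KN P P) (KN g P) (KN g g) (KN P P) (KN g P)]
    simp only [dot4_KN, KN, hgg, hPP, hgP, hPg]
    ring
  -- T·T·T
  have hTTT : dot4 Ginv (dot4 Ginv (Tgst n ρ g P) (Tgst n ρ g P)) (Tgst n ρ g P)
      = fun p q r s =>
      (2 * ρ ^ 3 * ((n : ℝ) - 2) ^ 3 * ((n : ℝ) - 3) ^ 3) * KN g g p q r s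
        + (16 * ρ ^ 3) * KN P P p q r s
        + (-(4 * ρ ^ 3 * ((n : ℝ) - 3) ^ 3)) * KN g P p q r s := by
    rw [hTT, hT]
    funext p q r s
    rw [dot4_lin Ginv (KN g g) (KN P P) (KN g P) (KN g g) (KN P P) (KN g P)]
    simp only [dot4_KN, KN, hgg, hPP, hgP, hPg]
    ring
  rw [hTTT, ftr4_lin Ginv (KN g g) (KN P P) (KN g P),
    ftr4_KN Ginv g g hgsymm hgsymm, ftr4_KN Ginv P P hPsymm hPsymm,
    ftr4_KN Ginv g P hgsymm hPsymm]
  have t1 : tr2 Ginv (dot2 Ginv g g) = tr2 Ginv g := by simp only [tr2, hgg]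
  have t2 : tr2 Ginv (dot2 Ginv P P) = tr2 Ginv P := by simp only [tr2, hPP]
  have t3 : tr2 Ginv (dot2 Ginv g P) = 0 := by
    simp only [tr2, hgP, mul_zero, Finset.sum_const_zero]
  have t4 : tr2 Ginv (dot2 Ginv P g) = 0 := by
    simp only [tr2, hPg, mul_zero, Finset.sum_const_zero]
  rw [t1, t2, t3, t4, htrg, htrP]
  ring
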